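/- Let R̃₀ > 0. There exists a constant C₀ > 0 such that for every k > 0 and every u ∈ C_c^∞(B(0,R̃₀)), one has C₀ k^{−2} ∫ u(x)² e^{2k x₁} dx ≤ ∫ (k^{−2} Δu(x))² e^{2k x₁} dx, i.e. C₀ k² ∫ u(x)² e^{2k x₁} dx ≤ ∫ (Δu(x))² e^{2k x₁} dx, where x₁ denotes the first coordinate of x ∈ ℝ². -/

import Mathlib

open MeasureTheory Metric Real

noncomputable section

abbrev E2 : Type := EuclideanSpace ℝ (Fin 2)

/-- The Euclidean Laplacian of a real-valued function on `ℝ²`. -/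
noncomputable def lap (f : E2 → ℝ) (x : E2) : ℝ :=
  ∑ i : Fin 2, fderiv ℝ (fun y => fderiv ℝ f y (EuclideanSpace.single i 1)) x
    (EuclideanSpace.single i 1)

/-- `u` is a weak solution of `(-h²Δ + V - E)u = 0` on `Ω`. -/
def IsWeakSol (Ω : Set E2) (h : ℝ) (V : E2 → ℝ) (En : ℝ) (u : E2 → ℝ) : Prop :=
  ∀ φ : E2 → ℝ, ContDiff ℝ (⊤ : ℕ∞) φ → HasCompactSupport φ → tsupport φ ⊆ Ω →
    ∫ x in Ω, u x * (-(h ^ 2) * lap φ x + (V x - En) * φ x) = 0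

namespace Stmt7Aux

lemma smooth_D {g : E2 → ℝ} (hg : ContDiff ℝ (⊤:ℕ∞) g) (c : E2) :
    ContDiff ℝ (⊤:ℕ∞) (fun y => fderiv ℝ g y c) :=
  (hg.fderiv_right (m := (⊤:ℕ∞)) (by simp)).clm_apply contDiff_const

/-- integration by parts: `g` compactly supported, both smooth. -/
lemma my_ibp {f g : E2 → ℝ} (hf : ContDiff ℝ (⊤:ℕ∞) f) (hg : ContDiff ℝ (⊤:ℕ∞) g)
    (hgc : HasCompactSupport g) (v : E2) :
    ∫ x, f x * fderiv ℝ g x v = - ∫ x, fderiv ℝ f x v * g x := by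
  have hDf : Continuous fun x => fderiv ℝ f x v := (smooth_D hf v).continuous
  have hDg : Continuous fun x => fderiv ℝ g x v := (smooth_D hg v).continuous
  have hDgc : HasCompactSupport fun x => fderiv ℝ g x v := hgc.fderiv_apply (𝕜 := ℝ) _
  apply integral_mul_fderiv_eq_neg_fderiv_mul_of_integrable
  · exact ((hDf.mul hg.continuous).integrable_of_hasCompactSupport hgc.mul_left)
  · exact ((hf.continuous.mul hDg).integrable_of_hasCompactSupport hDgc.mul_left)
  · exact ((hf.continuous.mul hg.continuous).integrable_of_hasCompactSupport hgc.mul_left)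
  · exact fun x _ => hf.differentiable (by simp) x
  · exact fun x _ => hg.differentiable (by simp) x

lemma my_self (f : E2 → ℝ) (hf : ContDiff ℝ (⊤:ℕ∞) f) (hfc : HasCompactSupport f) (v : E2) :
    ∫ x, f x * fderiv ℝ f x v = 0 := by
  have h := my_ibp hf hf hfc v
  have h2 : ∫ x, fderiv ℝ f x v * f x = ∫ x, f x * fderiv ℝ f x v :=
    integral_congr_ae (Filter.Eventually.of_forall fun x => by ring)
  rw [h2] at h; linarith

lemma my_symm {f : E2 → ℝ} (hf : ContDiff ℝ (⊤:ℕ∞) f) (x : E2) (a b : E2) :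
    fderiv ℝ (fun y => fderiv ℝ f y a) x b = fderiv ℝ (fun y => fderiv ℝ f y b) x a := by
  have hder : ContDiff ℝ (⊤:ℕ∞) (fderiv ℝ f) := hf.fderiv_right (m := (⊤:ℕ∞)) (by simp)
  have hd : DifferentiableAt ℝ (fderiv ℝ f) x := (hder.differentiable (by simp)).differentiableAt
  have key : ∀ c : E2, fderiv ℝ (fun y => fderiv ℝ f y c) x
      = (fderiv ℝ (fderiv ℝ f) x).flip c := by
    intro c
    rw [fderiv_clm_apply hd (differentiableAt_const c)]
    simp
  rw [key a, key b]
  have hsymm : IsSymmSndFDerivAt ℝ f x := (hf.contDiffAt).isSymmSndFDerivAt (by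
    simp only [minSmoothness_of_isRCLikeNormedField]
    exact le_trans (WithTop.coe_le_coe.mpr (le_top : (2:ℕ∞) ≤ ⊤)) le_rfl)
  simpa using hsymm b a

/-- cross term: `∫ (lap v) * ∂₀ v = 0`. -/
lemma my_cross {v : E2 → ℝ} (hv : ContDiff ℝ (⊤:ℕ∞) v) (hvc : HasCompactSupport v) :
    ∫ x, lap v x * fderiv ℝ v x (EuclideanSpace.single 0 1) = 0 := by
  set e : Fin 2 → E2 := fun i => EuclideanSpace.single i 1 with he
  have hint : ∀ i : Fin 2, ∫ x,
      fderiv ℝ (fun y => fderiv ℝ v y (e i)) x (e i) * fderiv ℝ v x (e 0) = 0 := by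
    intro i
    have h1 : ∫ x, fderiv ℝ v x (e 0) * fderiv ℝ (fun y => fderiv ℝ v y (e i)) x (e i)
        = - ∫ x, fderiv ℝ (fun y => fderiv ℝ v y (e 0)) x (e i) * fderiv ℝ v x (e i) :=
      my_ibp (smooth_D hv (e 0)) (smooth_D hv (e i)) (hvc.fderiv_apply (𝕜 := ℝ) _) (e i)
    have h2 : ∀ x, fderiv ℝ (fun y => fderiv ℝ v y (e 0)) x (e i)
        = fderiv ℝ (fun y => fderiv ℝ v y (e i)) x (e 0) := fun x => my_symm hv x _ _
    have h3 : ∫ x, fderiv ℝ (fun y => fderiv ℝ v y (e 0)) x (e i) * fderiv ℝ v x (e i)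
        = ∫ x, (fun y => fderiv ℝ v y (e i)) x *
            fderiv ℝ (fun y => fderiv ℝ v y (e i)) x (e 0) :=
      integral_congr_ae (Filter.Eventually.of_forall fun x => by simp only [h2 x]; ring)
    rw [h3, my_self _ (smooth_D hv (e i)) (hvc.fderiv_apply (𝕜 := ℝ) _) (e 0), neg_zero] at h1
    rw [← h1]
    exact integral_congr_ae (Filter.Eventually.of_forall fun x => by ring)
  have expand : ∀ x, lap v x * fderiv ℝ v x (e 0) =
      (fderiv ℝ (fun y => fderiv ℝ v y (e 0)) x (e 0)) * fderiv ℝ v x (e 0) +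
      (fderiv ℝ (fun y => fderiv ℝ v y (e 1)) x (e 1)) * fderiv ℝ v x (e 0) := by
    intro x; rw [lap, Fin.sum_univ_two]; ring
  have hI : ∀ i : Fin 2, Integrable (fun x =>
      fderiv ℝ (fun y => fderiv ℝ v y (e i)) x (e i) * fderiv ℝ v x (e 0)) := by
    intro i
    exact ((smooth_D (smooth_D hv (e i)) (e i)).continuous.mul
      (smooth_D hv (e 0)).continuous).integrable_of_hasCompactSupport
      (hvc.fderiv_apply (𝕜 := ℝ) _).mul_left
  calc ∫ x, lap v x * fderiv ℝ v x (e 0)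
      = ∫ x, (fderiv ℝ (fun y => fderiv ℝ v y (e 0)) x (e 0) * fderiv ℝ v x (e 0) +
          fderiv ℝ (fun y => fderiv ℝ v y (e 1)) x (e 1) * fderiv ℝ v x (e 0)) := by
        exact integral_congr_ae (Filter.Eventually.of_forall expand)
    _ = 0 := by
        rw [integral_add (hI 0) (hI 1), hint 0, hint 1]; norm_num

lemma my_poincare {v : E2 → ℝ} (hv : ContDiff ℝ (⊤:ℕ∞) v) (hvc : HasCompactSupport v)
    {R : ℝ} (hR : 0 < R) (hsupp : tsupport v ⊆ ball (0:E2) R) :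
    ∫ x, (v x)^2 ≤ 4*R^2 * ∫ x, (fderiv ℝ v x (EuclideanSpace.single 0 1))^2 := by
  set e0 : E2 := EuclideanSpace.single 0 1 with he0
  set d : E2 → ℝ := fun x => fderiv ℝ v x e0 with hd
  have hdv : ∀ x, DifferentiableAt ℝ v x := fun x => (hv.differentiable (by simp)).differentiableAt
  have hdc : Continuous d := (smooth_D hv e0).continuous
  have hdcs : HasCompactSupport d := hvc.fderiv_apply (𝕜 := ℝ) _
  have hf0 : ContDiff ℝ (⊤:ℕ∞) (fun x : E2 => x 0) := (EuclideanSpace.proj (0:Fin 2) : E2 →L[ℝ] ℝ).contDiff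
  have hvv : ContDiff ℝ (⊤:ℕ∞) (fun x => v x * v x) := hv.mul hv
  have hvvc : HasCompactSupport (fun x => v x * v x) := by
    apply hvc.mono
    intro x hx
    simp only [Function.mem_support] at hx ⊢
    intro h; apply hx; rw [h]; ring
  have h1 := my_ibp hf0 hvv hvvc e0
  have h2 : ∀ x : E2, fderiv ℝ (fun y => v y * v y) x e0 = 2 * (v x * d x) := by
    intro x
    rw [fderiv_fun_mul (hdv x) (hdv x)]
    simp only [ContinuousLinearMap.add_apply, ContinuousLinearMap.smul_apply, smul_eq_mul, hd]
    ring
  have h3 : ∀ x : E2, fderiv ℝ (fun x : E2 => x 0) x e0 = 1 := by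
    intro x
    rw [show (fun x : E2 => x 0) = ⇑(EuclideanSpace.proj (0:Fin 2)) from rfl,
      ContinuousLinearMap.fderiv]
    simp [he0, EuclideanSpace.single_apply]
  have key : ∫ x, (v x)^2 = ∫ x, (-2) * (x 0 * (v x * d x)) := by
    have l1 : ∫ x, (x 0) * (2 * (v x * d x)) = - ∫ x, (v x)^2 := by
      calc ∫ x, (x 0) * (2 * (v x * d x)) = ∫ x, (x 0) * fderiv ℝ (fun y => v y * v y) x e0 :=
            integral_congr_ae (Filter.Eventually.of_forall fun x => by simp only [h2])
        _ = - ∫ x, fderiv ℝ (fun x : E2 => x 0) x e0 * (v x * v x) := h1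
        _ = - ∫ x, (v x)^2 := by
            rw [integral_congr_ae (μ := volume)
              (Filter.Eventually.of_forall (fun x => by simp only [h3]; ring :
                ∀ x : E2, fderiv ℝ (fun x : E2 => x 0) x e0 * (v x * v x) = (v x)^2))]
    have : ∫ x, (-2) * (x 0 * (v x * d x)) = - ∫ x, (x 0) * (2 * (v x * d x)) := by
      rw [← integral_neg]
      exact integral_congr_ae (Filter.Eventually.of_forall fun x => by ring)
    rw [this, l1, neg_neg]
  have hpt : ∀ x : E2, (-2) * (x 0 * (v x * d x)) ≤ (1/2) * (v x)^2 + 2*R^2 * (d x)^2 := by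
    intro x
    by_cases hx : x ∈ tsupport v
    · have hxR : |x 0| ≤ R := by
        have h4 := hsupp hx
        rw [mem_ball, dist_zero_right] at h4
        refine le_trans ?_ h4.le
        rw [EuclideanSpace.norm_eq x]
        rw [show |x 0| = Real.sqrt ((x 0)^2) from (Real.sqrt_sq_eq_abs _).symm]
        apply Real.sqrt_le_sqrt
        have h6 : (x 0)^2 = ‖x 0‖^2 := by rw [Real.norm_eq_abs, sq_abs]
        rw [h6]
        exact Finset.single_le_sum (f := fun i => ‖x i‖^2) (fun i _ => by positivity)
          (Finset.mem_univ 0)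
      have habs : (-2) * (x 0 * (v x * d x)) ≤ 2 * R * |v x * d x| := by
        have h5 : (-2) * (x 0 * (v x * d x)) ≤ |(-2) * (x 0 * (v x * d x))| := le_abs_self _
        refine h5.trans ?_
        rw [abs_mul, abs_mul]
        simp only [abs_neg, abs_two]
        have := abs_nonneg (v x * d x)
        nlinarith [abs_nonneg (x 0)]
      refine habs.trans ?_
      rw [abs_mul]
      nlinarith [sq_nonneg (|v x| - 2*R*|d x|), sq_abs (v x), sq_abs (d x), abs_nonneg (v x),
        abs_nonneg (d x)]
    · have hv0 : v x = 0 := image_eq_zero_of_notMem_tsupport hx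
      rw [hv0]
      have : (-2) * (x 0 * (0 * d x)) = 0 := by ring
      rw [this]
      positivity
  have hlhs_int : Integrable (fun x : E2 => (-2) * (x 0 * (v x * d x))) := by
    apply Continuous.integrable_of_hasCompactSupport
    · exact (continuous_const.mul ((EuclideanSpace.proj (0:Fin 2)).continuous.mul
        (hv.continuous.mul hdc)))
    · apply hvc.mono
      intro x hx
      simp only [Function.mem_support] at hx ⊢
      intro h; apply hx; rw [h]; ring
  have hIv : Integrable (fun x : E2 => (1/2) * (v x)^2) := by
    apply Continuous.integrable_of_hasCompactSupport
    · exact continuous_const.mul (hv.continuous.pow 2)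
    · apply hvc.mono
      intro x hx
      simp only [Function.mem_support] at hx ⊢
      intro h; apply hx; rw [h]; ring
  have hId : Integrable (fun x : E2 => 2*R^2 * (d x)^2) := by
    apply Continuous.integrable_of_hasCompactSupport
    · exact continuous_const.mul (hdc.pow 2)
    · apply hdcs.mono
      intro x hx
      simp only [Function.mem_support] at hx ⊢
      intro h; apply hx; rw [h]; ring
  have hrhs_int : Integrable (fun x : E2 => (1/2) * (v x)^2 + 2*R^2 * (d x)^2) := hIv.add hId
  have hmono := integral_mono hlhs_int hrhs_int hpt
  rw [← key] at hmono
  have hsplit : ∫ x, ((1/2) * (v x)^2 + 2*R^2 * (d x)^2)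
      = (1/2) * (∫ x, (v x)^2) + 2*R^2 * (∫ x, (d x)^2) := by
    rw [integral_add hIv hId, MeasureTheory.integral_const_mul, MeasureTheory.integral_const_mul]
  rw [hsplit] at hmono
  have hQ : 0 ≤ ∫ x, (d x)^2 := integral_nonneg (fun x => sq_nonneg _)
  linarith

def wt (k : ℝ) : E2 → ℝ := fun x => Real.exp (k * x 0)

lemma wt_hasFDerivAt (k : ℝ) (x : E2) :
    HasFDerivAt (wt k) ((k * wt k x) • (EuclideanSpace.proj (0:Fin 2) : E2 →L[ℝ] ℝ)) x := by
  have hL : HasFDerivAt (fun x : E2 => k * x 0)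
      (k • (EuclideanSpace.proj (0:Fin 2) : E2 →L[ℝ] ℝ)) x := by
    simpa using ((EuclideanSpace.proj (0:Fin 2) : E2 →L[ℝ] ℝ).hasFDerivAt (x := x)).const_mul k
  have := hL.exp
  rw [smul_smul] at this
  rw [show k * wt k x = rexp (k * x 0) * k by simp [wt, mul_comm]]
  exact this

lemma wt_contDiff (k : ℝ) : ContDiff ℝ (⊤:ℕ∞) (wt k) := by
  have : ContDiff ℝ (⊤:ℕ∞) (fun x : E2 => k * x 0) :=
    contDiff_const.mul ((EuclideanSpace.proj (0:Fin 2) : E2 →L[ℝ] ℝ).contDiff)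
  exact Real.contDiff_exp.comp this

/-- product rule specialised to the weight -/
lemma Dwt_mul (k : ℝ) {f : E2 → ℝ} {x : E2} (hf : DifferentiableAt ℝ f x) (i : Fin 2) :
    fderiv ℝ (fun y => wt k y * f y) x (EuclideanSpace.single i 1)
      = wt k x * ((k * (EuclideanSpace.single i (1:ℝ) 0)) * f x
          + fderiv ℝ f x (EuclideanSpace.single i 1)) := by
  rw [fderiv_fun_mul ((wt_hasFDerivAt k x).differentiableAt) hf]
  have hw : fderiv ℝ (wt k) x = (k * wt k x) • (EuclideanSpace.proj (0:Fin 2) : E2 →L[ℝ] ℝ) :=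
    (wt_hasFDerivAt k x).fderiv
  simp only [ContinuousLinearMap.add_apply, ContinuousLinearMap.smul_apply, smul_eq_mul, hw]
  have : (EuclideanSpace.proj (0:Fin 2) : E2 →L[ℝ] ℝ) (EuclideanSpace.single i 1)
      = EuclideanSpace.single i (1:ℝ) 0 := rfl
  rw [this]
  ring

lemma DD_wt {k : ℝ} {u : E2 → ℝ} (hu : ContDiff ℝ (⊤:ℕ∞) u) (i : Fin 2) (x : E2) :
    fderiv ℝ (fun y => fderiv ℝ (fun z => wt k z * u z) y (EuclideanSpace.single i 1)) x
        (EuclideanSpace.single i 1)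
      = wt k x * ((k * (EuclideanSpace.single i (1:ℝ) 0))
            * ((k * (EuclideanSpace.single i (1:ℝ) 0)) * u x
                + fderiv ℝ u x (EuclideanSpace.single i 1))
          + ((k * (EuclideanSpace.single i (1:ℝ) 0)) * fderiv ℝ u x (EuclideanSpace.single i 1)
              + fderiv ℝ (fun y => fderiv ℝ u y (EuclideanSpace.single i 1)) x
                  (EuclideanSpace.single i 1))) := by
  have hud : ∀ y, DifferentiableAt ℝ u y := fun y => (hu.differentiable (by simp)).differentiableAt
  have hstep : (fun y => fderiv ℝ (fun z => wt k z * u z) y (EuclideanSpace.single i 1))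
      = fun y => wt k y * ((k * (EuclideanSpace.single i (1:ℝ) 0)) * u y
          + fderiv ℝ u y (EuclideanSpace.single i 1)) :=
    funext fun y => Dwt_mul k (hud y) i
  rw [hstep]
  have hg : DifferentiableAt ℝ (fun y => (k * (EuclideanSpace.single i (1:ℝ) 0)) * u y
      + fderiv ℝ u y (EuclideanSpace.single i 1)) x :=
    (((hud x).const_mul _).add
      (((smooth_D hu _).differentiable (by simp)).differentiableAt))
  rw [Dwt_mul k hg i]
  have hsum : fderiv ℝ (fun y => (k * (EuclideanSpace.single i (1:ℝ) 0)) * u y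
      + fderiv ℝ u y (EuclideanSpace.single i 1)) x
      = (k * (EuclideanSpace.single i (1:ℝ) 0)) • fderiv ℝ u x
        + fderiv ℝ (fun y => fderiv ℝ u y (EuclideanSpace.single i 1)) x := by
    rw [fderiv_fun_add ((hud x).const_mul _)
      (((smooth_D hu _).differentiable (by simp)).differentiableAt),
      fderiv_const_mul (hud x)]
  rw [hsum]
  simp only [ContinuousLinearMap.add_apply, ContinuousLinearMap.smul_apply, smul_eq_mul]

lemma lap_conj {k : ℝ} {u : E2 → ℝ} (hu : ContDiff ℝ (⊤:ℕ∞) u) (x : E2) :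
    lap (fun y => wt k y * u y) x
      = wt k x * (k^2 * u x + 2*k*fderiv ℝ u x (EuclideanSpace.single 0 1) + lap u x) := by
  have e00 : (EuclideanSpace.single (0:Fin 2) (1:ℝ)) 0 = 1 := by
    rw [EuclideanSpace.single_apply]; simp
  have e10 : (EuclideanSpace.single (1:Fin 2) (1:ℝ)) 0 = 0 := by
    rw [EuclideanSpace.single_apply]; simp
  rw [lap, lap, Fin.sum_univ_two, Fin.sum_univ_two, DD_wt hu 0 x, DD_wt hu 1 x, e00, e10]
  ring

end Stmt7Aux

/-- Boundary-case Carleman inequality with linear weight `ω(x) = x₁`. -/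
theorem stmt7 (Rt₀ : ℝ) (hRt₀ : 0 < Rt₀) :
    ∃ C₀ > (0 : ℝ), ∀ k : ℝ, 0 < k →
      ∀ u : E2 → ℝ, ContDiff ℝ (⊤ : ℕ∞) u → HasCompactSupport u →
        tsupport u ⊆ ball (0 : E2) Rt₀ →
        C₀ * k ^ 2 * ∫ x : E2, u x ^ 2 * Real.exp (2 * k * x 0) ≤
          ∫ x : E2, (lap u x) ^ 2 * Real.exp (2 * k * x 0) := by
  open Stmt7Aux in
  refine ⟨Rt₀⁻¹^2, by positivity, fun k hk u hu huc hsupp => ?_⟩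
  set e0 : E2 := EuclideanSpace.single 0 1 with he0
  set v : E2 → ℝ := fun x => wt k x * u x with hvdef
  have hv : ContDiff ℝ (⊤:ℕ∞) v := (wt_contDiff k).mul hu
  have hvc : HasCompactSupport v := huc.mul_left
  have hvsupp : tsupport v ⊆ ball (0:E2) Rt₀ := by
    refine subset_trans ?_ hsupp
    apply closure_mono
    intro x hx
    simp only [Function.mem_support, hvdef] at hx ⊢
    intro h; apply hx; rw [h]; ring
  have hud : ∀ y, DifferentiableAt ℝ u y := fun y => (hu.differentiable (by simp)).differentiableAt
  have e00 : (EuclideanSpace.single (0:Fin 2) (1:ℝ)) 0 = 1 := by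
    rw [EuclideanSpace.single_apply]; simp
  -- first-order conjugation
  have hDv : ∀ x, fderiv ℝ v x e0 = wt k x * (k * u x + fderiv ℝ u x e0) := by
    intro x
    rw [hvdef, he0]
    rw [Dwt_mul k (hud x) 0, e00]
    ring_nf
  -- pointwise conjugation of the Laplacian
  have hconj : ∀ x, lap v x - 2*k*fderiv ℝ v x e0 + k^2 * v x = wt k x * lap u x := by
    intro x
    rw [hDv x, hvdef, lap_conj hu x, he0]
    ring
  -- weight square
  have hwsq : ∀ x : E2, Real.exp (2 * k * x 0) = wt k x * wt k x := by
    intro x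
    rw [show 2 * k * x 0 = k * x 0 + k * x 0 by ring, Real.exp_add]
    rfl
  -- pieces
  set S : E2 → ℝ := fun x => lap v x + k^2 * v x with hSdef
  set T : E2 → ℝ := fun x => 2*k*fderiv ℝ v x e0 with hTdef
  -- continuity and compact support facts
  have hlapv_eq : lap v = fun x =>
      fderiv ℝ (fun y => fderiv ℝ v y (EuclideanSpace.single 0 1)) x (EuclideanSpace.single 0 1)
      + fderiv ℝ (fun y => fderiv ℝ v y (EuclideanSpace.single 1 1)) x
          (EuclideanSpace.single 1 1) :=
    funext fun x => by rw [lap, Fin.sum_univ_two]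
  have hlapv_cont : Continuous (lap v) := by
    rw [hlapv_eq]
    exact ((smooth_D (smooth_D hv _) _).continuous.add (smooth_D (smooth_D hv _) _).continuous)
  have hlapv_cs : HasCompactSupport (lap v) := by
    rw [hlapv_eq]
    exact ((hvc.fderiv_apply (𝕜 := ℝ) _).fderiv_apply (𝕜 := ℝ) _).add
      ((hvc.fderiv_apply (𝕜 := ℝ) _).fderiv_apply (𝕜 := ℝ) _)
  have hS_cont : Continuous S := hlapv_cont.add (continuous_const.mul hv.continuous)
  have hS_cs : HasCompactSupport S := hlapv_cs.add hvc.mul_left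
  have hT_cont : Continuous T := continuous_const.mul (smooth_D hv e0).continuous
  have hT_cs : HasCompactSupport T := (hvc.fderiv_apply (𝕜 := ℝ) e0).mul_left
  -- the cross term vanishes
  have hcross : ∫ x, S x * T x = 0 := by
    have h1 : ∫ x, lap v x * fderiv ℝ v x e0 = 0 := my_cross hv hvc
    have h2 : ∫ x, v x * fderiv ℝ v x e0 = 0 := my_self v hv hvc e0
    have hsplit : ∫ x, S x * T x
        = 2*k*(∫ x, lap v x * fderiv ℝ v x e0) + 2*k^3*(∫ x, v x * fderiv ℝ v x e0) := by
      rw [← MeasureTheory.integral_const_mul, ← MeasureTheory.integral_const_mul,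
        ← integral_add]
      · exact integral_congr_ae (Filter.Eventually.of_forall fun x => by
          simp only [hSdef, hTdef]; ring)
      · apply Continuous.integrable_of_hasCompactSupport
        · exact continuous_const.mul (hlapv_cont.mul (smooth_D hv e0).continuous)
        · apply (hvc.fderiv_apply (𝕜 := ℝ) e0).mono
          intro x hx
          simp only [Function.mem_support] at hx ⊢
          intro h; apply hx; rw [h]; ring
      · apply Continuous.integrable_of_hasCompactSupport
        · exact continuous_const.mul (hv.continuous.mul (smooth_D hv e0).continuous)
        · apply (hvc.fderiv_apply (𝕜 := ℝ) e0).mono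
          intro x hx
          simp only [Function.mem_support] at hx ⊢
          intro h; apply hx; rw [h]; ring
    rw [hsplit, h1, h2]; ring
  -- integrability of the squares
  have hsq_cs : ∀ {f : E2 → ℝ}, HasCompactSupport f → HasCompactSupport (fun x => f x ^ 2) := by
    intro f hf
    apply hf.mono
    intro x hx
    simp only [Function.mem_support] at hx ⊢
    intro h; apply hx; rw [h]; ring
  have hIS : Integrable (fun x => S x ^ 2) :=
    (hS_cont.pow 2).integrable_of_hasCompactSupport (hsq_cs hS_cs)
  have hIT : Integrable (fun x => T x ^ 2) :=
    (hT_cont.pow 2).integrable_of_hasCompactSupport (hsq_cs hT_cs)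
  have hIST : Integrable (fun x => (-2) * (S x * T x)) := by
    apply Continuous.integrable_of_hasCompactSupport
    · exact continuous_const.mul (hS_cont.mul hT_cont)
    · apply hT_cs.mono
      intro x hx
      simp only [Function.mem_support] at hx ⊢
      intro h; apply hx; rw [h]; ring
  -- the RHS integral equals ∫ S² + ∫ T²
  have hB : ∫ x : E2, (lap u x) ^ 2 * Real.exp (2 * k * x 0)
      = (∫ x, S x ^ 2) + ((∫ x, (-2) * (S x * T x)) + ∫ x, T x ^ 2) := by
    calc ∫ x : E2, (lap u x) ^ 2 * Real.exp (2 * k * x 0)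
        = ∫ x, (S x ^ 2 + ((-2) * (S x * T x) + T x ^ 2)) := by
          have hpt : ∀ x : E2, (lap u x) ^ 2 * Real.exp (2 * k * x 0)
              = S x ^ 2 + ((-2) * (S x * T x) + T x ^ 2) := by
            intro x
            have hx := hconj x
            have hy : (lap u x) ^ 2 * Real.exp (2 * k * x 0) = (wt k x * lap u x)^2 := by
              rw [hwsq x]; ring
            rw [hy, ← hx]
            simp only [hSdef, hTdef]
            ring
          exact integral_congr_ae (Filter.Eventually.of_forall hpt)
      _ = (∫ x, S x ^ 2) + ∫ x, ((-2) * (S x * T x) + T x ^ 2) :=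
          integral_add hIS (hIST.add hIT)
      _ = (∫ x, S x ^ 2) + ((∫ x, (-2) * (S x * T x)) + ∫ x, T x ^ 2) := by
          rw [integral_add hIST hIT]
  have hSTint : ∫ x, (-2) * (S x * T x) = 0 := by
    rw [MeasureTheory.integral_const_mul, hcross]; ring
  -- ∫ T² = 4 k² Q
  have hTQ : ∫ x, T x ^ 2 = 4 * k^2 * ∫ x, (fderiv ℝ v x e0)^2 := by
    rw [← MeasureTheory.integral_const_mul]
    have hpt : ∀ x : E2, T x ^ 2 = 4 * k^2 * (fderiv ℝ v x e0)^2 := by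
      intro x; simp only [hTdef]; ring
    exact integral_congr_ae (Filter.Eventually.of_forall hpt)
  -- the LHS integral equals ∫ v²
  have hA : ∫ x : E2, u x ^ 2 * Real.exp (2 * k * x 0) = ∫ x, (v x)^2 := by
    have hpt : ∀ x : E2, u x ^ 2 * Real.exp (2 * k * x 0) = (v x)^2 := by
      intro x
      rw [hwsq x]
      simp only [hvdef]
      ring
    exact integral_congr_ae (Filter.Eventually.of_forall hpt)
  -- Poincaré
  have hpoin := my_poincare hv hvc hRt₀ hvsupp
  rw [← he0] at hpoin
  have hSnn : 0 ≤ ∫ x, S x ^ 2 := integral_nonneg fun x => sq_nonneg _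
  have hQnn : 0 ≤ ∫ x, (fderiv ℝ v x e0)^2 := integral_nonneg fun x => sq_nonneg _
  rw [hB, hSTint, hTQ, hA]
  have hR2 : (0:ℝ) < Rt₀^2 := by positivity
  have hk2 : (0:ℝ) < k^2 := by positivity
  have h7 : k^2 * ∫ x, (v x)^2 ≤ k^2 * (4*Rt₀^2 * ∫ x, (fderiv ℝ v x e0)^2) :=
    mul_le_mul_of_nonneg_left hpoin hk2.le
  have h8 : Rt₀⁻¹^2 * (k^2 * ∫ x, (v x)^2)
      ≤ Rt₀⁻¹^2 * (k^2 * (4*Rt₀^2 * ∫ x, (fderiv ℝ v x e0)^2)) :=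
    mul_le_mul_of_nonneg_left h7 (by positivity)
  have h9 : Rt₀⁻¹^2 * (k^2 * (4*Rt₀^2 * ∫ x, (fderiv ℝ v x e0)^2))
      = 4 * k^2 * ∫ x, (fderiv ℝ v x e0)^2 := by
    field_simp
  rw [h9] at h8
  linarith
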